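/- Let M be an even positive integer and let j be a divisor of M. Then there exists a matrix h ∈ SL₂(ℤ/Mℤ) such that: (i) h reduces to the identity matrix in SL₂(ℤ/jℤ); (ii) for every prime p dividing M/j, the reduction of h in SL₂(ℤ/jpℤ) is not the identity matrix; and (iii) the reduction of h modulo 2 is sent to 1 by every group homomorphism from GL₂(ℤ/2ℤ) to {±1}. -/

import Mathlib

open Matrix

lemma cube_one : ∀ c : ZMod 2, (!![1, c; -c, 1 - c^2]) ^ 3 = 1 := by decide

lemma map_mat {M d : ℕ} (j : ℕ) (f : ZMod M →+* ZMod d) :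
    (!![1, (j : ZMod M); -(j : ZMod M), 1 - (j : ZMod M)^2]).map f
      = !![1, (j : ZMod d); -(j : ZMod d), 1 - (j : ZMod d)^2] := by
  ext i k
  fin_cases i <;> fin_cases k <;>
    simp [Matrix.map_apply, _root_.map_one, map_natCast, map_neg, map_sub, map_pow]

/-- For `M` an even positive integer and `j ∣ M`, there is a matrix
`h ∈ SL₂(ℤ/Mℤ)` that is trivial mod `j`, nontrivial mod `jp` for every prime `p ∣ M/j`,
and whose reduction mod 2 is killed by every homomorphism `GL₂(ℤ/2ℤ) → {±1}`. -/
theorem stmt2 (M j : ℕ) (hM : 0 < M) (hM2 : 2 ∣ M) (hj : j ∣ M) :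
    ∃ h : Matrix.SpecialLinearGroup (Fin 2) (ZMod M),
      Matrix.SpecialLinearGroup.map (ZMod.castHom hj (ZMod j)) h = 1 ∧
      (∀ p : ℕ, p.Prime → ∀ hp : p ∣ M / j,
        Matrix.SpecialLinearGroup.map
          (ZMod.castHom
            (show j * p ∣ M from
              (Nat.mul_div_cancel' hj) ▸ mul_dvd_mul_left j hp)
            (ZMod (j * p))) h ≠ 1) ∧
      (∀ χ : GL (Fin 2) (ZMod 2) →* ℤˣ,
        χ (Matrix.SpecialLinearGroup.toGL
            (Matrix.SpecialLinearGroup.map (ZMod.castHom hM2 (ZMod 2)) h)) = 1) := by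
  have hjpos : 0 < j := Nat.pos_of_dvd_of_pos hj hM
  refine ⟨⟨!![1, (j : ZMod M); -(j : ZMod M), 1 - (j : ZMod M)^2], by
      simp [Matrix.det_fin_two_of]; ring⟩, ?_, ?_, ?_⟩
  · apply Subtype.ext
    erw [Matrix.SpecialLinearGroup.map_apply_coe, RingHom.mapMatrix_apply, map_mat,
      Matrix.SpecialLinearGroup.coe_one]
    norm_num [ZMod.natCast_self]
    ext i k
    fin_cases i <;> fin_cases k <;> simp
  · intro p hp hpd hcon
    have h01 := (Matrix.SpecialLinearGroup.ext_iff _ _).mp hcon 0 1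
    erw [Matrix.SpecialLinearGroup.map_apply_coe, RingHom.mapMatrix_apply, map_mat] at h01
    simp [Matrix.SpecialLinearGroup.coe_one] at h01
    have hdvd : (j * p) ∣ j := by
      haveI : NeZero (j * p) := ⟨Nat.mul_ne_zero hjpos.ne' hp.pos.ne'⟩
      exact (ZMod.natCast_eq_zero_iff j (j * p)).mp h01
    have hle : j * p ≤ j := Nat.le_of_dvd hjpos hdvd
    nlinarith [hp.two_le]
  · intro χ
    set g := Matrix.SpecialLinearGroup.map (ZMod.castHom hM2 (ZMod 2))
      (⟨!![1, (j : ZMod M); -(j : ZMod M), 1 - (j : ZMod M)^2], by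
        simp [Matrix.det_fin_two_of]; ring⟩ : Matrix.SpecialLinearGroup (Fin 2) (ZMod M))
      with hg
    have hg3 : g ^ 3 = 1 := by
      apply Subtype.ext
      rw [Matrix.SpecialLinearGroup.coe_pow, hg]
      erw [Matrix.SpecialLinearGroup.map_apply_coe, RingHom.mapMatrix_apply, map_mat,
        cube_one, Matrix.SpecialLinearGroup.coe_one]
    have h3 : χ g.toGL ^ 3 = 1 := by
      rw [← map_pow, ← map_pow, hg3, _root_.map_one, _root_.map_one]
    have h2 : χ g.toGL ^ 2 = 1 := Int.units_sq _
    calc χ g.toGL = χ g.toGL ^ 3 * (χ g.toGL ^ 2)⁻¹ := by group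
    _ = 1 := by rw [h3, h2]; simp
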